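/- Let Ω ⊆ ℂ be open, let α : Ω → ℂ be holomorphic, let û : Ω → ℝ be smooth with e^{2û(w)} > |α(w)|² for all w ∈ Ω, and let u : Ω → ℝ be the smooth function determined by 2e^u = e^û + |α|² e^{−û}. Set B := e^{2u} − |α|², so that B = ((e^û − |α|² e^{−û})/2)² > 0 on Ω. Then the equation u_{zz̄} e^u B − (1/4)|α_z|² e^u − |u_z|² e^u |α|² + (1/2)α_z u_z̄ e^u ᾱ + (1/2)(ᾱ)_z̄ u_z e^u α + 2B² = 0 holds on Ω if and only if û satisfies the elliptic sinh–Gordon equation û_{zz̄} + e^û − |α|² e^{−û} = 0 on Ω. -/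

import Mathlib

open Complex ComplexConjugate

/-- Wirtinger derivative `g_z = (∂ₓg - i ∂_y g)/2`. -/
noncomputable def wderivZ (g : ℂ → ℂ) (w : ℂ) : ℂ :=
  (fderiv ℝ g w 1 - Complex.I * fderiv ℝ g w Complex.I) / 2

/-- Wirtinger derivative `g_z̄ = (∂ₓg + i ∂_y g)/2`. -/
noncomputable def wderivZbar (g : ℂ → ℂ) (w : ℂ) : ℂ :=
  (fderiv ℝ g w 1 + Complex.I * fderiv ℝ g w Complex.I) / 2

section Kit

variable {f g : ℂ → ℂ} {w c : ℂ}

lemma wderivZ_congr (h : f =ᶠ[nhds w] g) : wderivZ f w = wderivZ g w := by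
  unfold wderivZ; rw [h.fderiv_eq]

lemma wderivZbar_congr (h : f =ᶠ[nhds w] g) : wderivZbar f w = wderivZbar g w := by
  unfold wderivZbar; rw [h.fderiv_eq]

lemma wderivZ_add (hf : DifferentiableAt ℝ f w) (hg : DifferentiableAt ℝ g w) :
    wderivZ (fun z => f z + g z) w = wderivZ f w + wderivZ g w := by
  unfold wderivZ; rw [fderiv_fun_add hf hg]; simp; ring

lemma wderivZbar_add (hf : DifferentiableAt ℝ f w) (hg : DifferentiableAt ℝ g w) :
    wderivZbar (fun z => f z + g z) w = wderivZbar f w + wderivZbar g w := by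
  unfold wderivZbar; rw [fderiv_fun_add hf hg]; simp; ring

lemma wderivZ_mul (hf : DifferentiableAt ℝ f w) (hg : DifferentiableAt ℝ g w) :
    wderivZ (fun z => f z * g z) w = wderivZ f w * g w + f w * wderivZ g w := by
  unfold wderivZ; rw [fderiv_fun_mul hf hg]; simp [smul_eq_mul]; ring

lemma wderivZbar_mul (hf : DifferentiableAt ℝ f w) (hg : DifferentiableAt ℝ g w) :
    wderivZbar (fun z => f z * g z) w = wderivZbar f w * g w + f w * wderivZbar g w := by
  unfold wderivZbar; rw [fderiv_fun_mul hf hg]; simp [smul_eq_mul]; ring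

lemma wderivZ_const_mul (hf : DifferentiableAt ℝ f w) (c : ℂ) :
    wderivZ (fun z => c * f z) w = c * wderivZ f w := by
  unfold wderivZ; rw [fderiv_const_mul hf c]; simp; ring

lemma wderivZbar_const_mul (hf : DifferentiableAt ℝ f w) (c : ℂ) :
    wderivZbar (fun z => c * f z) w = c * wderivZbar f w := by
  unfold wderivZbar; rw [fderiv_const_mul hf c]; simp; ring

lemma wderivZ_neg (hf : DifferentiableAt ℝ f w) :
    wderivZ (fun z => -f z) w = -wderivZ f w := by
  unfold wderivZ; rw [fderiv_fun_neg]; simp; ring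

lemma wderivZbar_neg (hf : DifferentiableAt ℝ f w) :
    wderivZbar (fun z => -f z) w = -wderivZbar f w := by
  unfold wderivZbar; rw [fderiv_fun_neg]; simp; ring

lemma wderivZ_cexp (hf : DifferentiableAt ℝ f w) :
    wderivZ (fun z => Complex.exp (f z)) w = Complex.exp (f w) * wderivZ f w := by
  have h : HasFDerivAt (fun z => Complex.exp (f z))
      ((((1 : ℂ →L[ℂ] ℂ).smulRight (Complex.exp (f w))).restrictScalars ℝ).comp
        (fderiv ℝ f w)) w :=
    ((Complex.hasDerivAt_exp (f w)).hasFDerivAt.restrictScalars ℝ).comp w hf.hasFDerivAt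
  unfold wderivZ; rw [h.fderiv]; simp [smul_eq_mul]; ring

lemma wderivZbar_cexp (hf : DifferentiableAt ℝ f w) :
    wderivZbar (fun z => Complex.exp (f z)) w = Complex.exp (f w) * wderivZbar f w := by
  have h : HasFDerivAt (fun z => Complex.exp (f z))
      ((((1 : ℂ →L[ℂ] ℂ).smulRight (Complex.exp (f w))).restrictScalars ℝ).comp
        (fderiv ℝ f w)) w :=
    ((Complex.hasDerivAt_exp (f w)).hasFDerivAt.restrictScalars ℝ).comp w hf.hasFDerivAt
  unfold wderivZbar; rw [h.fderiv]; simp [smul_eq_mul]; ring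

lemma wderivZ_of_holo (hf : DifferentiableAt ℂ f w) : wderivZ f w = deriv f w := by
  have h := (hf.hasDerivAt.hasFDerivAt).restrictScalars ℝ
  unfold wderivZ; rw [h.fderiv]; simp [smul_eq_mul]
  ring_nf
  simp [Complex.I_sq]
  try ring

lemma wderivZbar_of_holo (hf : DifferentiableAt ℂ f w) : wderivZbar f w = 0 := by
  have h := (hf.hasDerivAt.hasFDerivAt).restrictScalars ℝ
  unfold wderivZbar; rw [h.fderiv]; simp [smul_eq_mul]
  ring_nf
  simp [Complex.I_sq]
  try ring

lemma wderivZbar_conj (hf : DifferentiableAt ℝ f w) :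
    wderivZbar (fun z => conj (f z)) w = conj (wderivZ f w) := by
  have h : HasFDerivAt (fun z => conj (f z))
      ((Complex.conjCLE : ℂ →L[ℝ] ℂ).comp (fderiv ℝ f w)) w :=
    (Complex.conjCLE.hasFDerivAt).comp w hf.hasFDerivAt
  unfold wderivZbar wderivZ; rw [h.fderiv]
  simp [map_sub, map_mul, map_ofNat, Complex.conj_I]
  try ring

lemma wderivZ_conj (hf : DifferentiableAt ℝ f w) :
    wderivZ (fun z => conj (f z)) w = conj (wderivZbar f w) := by
  have h : HasFDerivAt (fun z => conj (f z))
      ((Complex.conjCLE : ℂ →L[ℝ] ℂ).comp (fderiv ℝ f w)) w :=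
    (Complex.conjCLE.hasFDerivAt).comp w hf.hasFDerivAt
  unfold wderivZbar wderivZ; rw [h.fderiv]
  simp [map_add, map_mul, map_ofNat, Complex.conj_I]
  try ring

lemma wderivZbar_eq_conj_of_real (u : ℂ → ℝ) (hf : DifferentiableAt ℝ (fun z => (u z : ℂ)) w) :
    wderivZbar (fun z => (u z : ℂ)) w = conj (wderivZ (fun z => (u z : ℂ)) w) := by
  have h := wderivZbar_conj hf
  simpa using h

lemma diffAt_wderivZ {Ω : Set ℂ} (hΩ : IsOpen Ω) (hf : ContDiffOn ℝ (⊤ : ℕ∞) f Ω)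
    (hw : w ∈ Ω) : DifferentiableAt ℝ (fun z => wderivZ f z) w := by
  have hfd : ContDiffOn ℝ (⊤ : ℕ∞) (fderiv ℝ f) Ω := by
    exact hf.fderiv_of_isOpen hΩ (by exact_mod_cast le_top)
  have h1 : DifferentiableAt ℝ (fderiv ℝ f) w :=
    (hfd.differentiableOn (by simp)).differentiableAt (hΩ.mem_nhds hw)
  have h2 : DifferentiableAt ℝ (fun z => fderiv ℝ f z 1) w :=
    (ContinuousLinearMap.apply ℝ ℂ (1 : ℂ)).differentiableAt.comp w h1
  have h3 : DifferentiableAt ℝ (fun z => fderiv ℝ f z Complex.I) w :=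
    (ContinuousLinearMap.apply ℝ ℂ Complex.I).differentiableAt.comp w h1
  simp only [wderivZ]
  have h4 : (fun z => ((fderiv ℝ f z) 1 - Complex.I * (fderiv ℝ f z) Complex.I) / 2)
      = fun z => ((fderiv ℝ f z) 1 - Complex.I * (fderiv ℝ f z) Complex.I) * (2:ℂ)⁻¹ := by
    funext z; rw [div_eq_mul_inv]
  rw [h4]
  exact (h2.sub (h3.const_mul Complex.I)).mul_const _

end Kit

set_option maxHeartbeats 1000000 in
lemma key_alg (E N v a b d e s t m P Q M : ℂ)
    (hEN : E * N = 1) (hv0 : v ≠ 0)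
    (hv : 2*v = E + a*b*N)
    (hP : 2*v*P = s*(E - a*b*N) + d*b*N)
    (hQ : 2*v*Q = t*(E - a*b*N) + e*a*N)
    (hM : 2*(Q*v*P + v*M) = m*E + s*(t*E)
        + ((d*e*N + d*b*(N*(-t))) + (a*e)*(N*(-s)) + a*b*((N*(-t))*(-s) + N*(-m)))) :
    M*v*(v^2 - a*b) - (1/4)*(d*e)*v - (P*Q)*v*(a*b)
      + (1/2)*d*Q*v*b + (1/2)*e*P*v*a + 2*(v^2-a*b)^2
      = ((E - a*b*N)/2)^3 * (m + E - a*b*N) := by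
  have hE0 : E ≠ 0 := left_ne_zero_of_mul_eq_one hEN
  have hmain : (E^5*(4*v^2)) * (M*v*(v^2 - a*b) - (1/4)*(d*e)*v - (P*Q)*v*(a*b)
      + (1/2)*d*Q*v*b + (1/2)*e*P*v*a + 2*(v^2-a*b)^2)
      = (E^5*(4*v^2)) * (((E - a*b*N)/2)^3 * (m + E - a*b*N)) := by
    linear_combination (norm := ring1) ((2:ℂ)*v^4*E^5 + (-2:ℂ)*v^2*E^5*a*b) * hM - ((2:ℂ)*v^4*E^5*Q + (-1:ℂ)*v^2*E^5*a*e) * hP - ((1:ℂ)*v^3*E^6*s + (-1:ℂ)*v^3*E^5*N*a*b*s + (1:ℂ)*v^3*E^5*N*b*d + (-1:ℂ)*v^2*E^5*b*d) * hQ + ((4:ℂ)*v^5*E^5 + (2:ℂ)*v^4*E^6 + (2:ℂ)*v^4*E^5*N*a*b + (1:ℂ)*v^3*E^7 + (2:ℂ)*v^3*E^6*N*a*b + (1:ℂ)*v^3*E^6*s*t + (1:ℂ)*v^3*E^6*m + (1:ℂ)*v^3*E^5*N^2*a^2*b^2 + (1:ℂ)*v^3*E^5*N*a*b*s*t + (-1:ℂ)*v^3*E^5*N*a*b*m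 + (-1:ℂ)*v^3*E^5*N*a*e*s + (-1:ℂ)*v^3*E^5*N*b*d*t + (1:ℂ)*v^3*E^5*N*d*e + (-8:ℂ)*v^3*E^5*a*b + ((1:ℂ)/2)*v^2*E^8 + ((3:ℂ)/2)*v^2*E^7*N*a*b + ((1:ℂ)/2)*v^2*E^7*m + ((3:ℂ)/2)*v^2*E^6*N^2*a^2*b^2 + (2:ℂ)*v^2*E^6*N*a*b*s*t + (-1:ℂ)*v^2*E^6*N*a*e*s + (-1:ℂ)*v^2*E^6*N*b*d*t + ((1:ℂ)/2)*v^2*E^6*N*d*e + (-4:ℂ)*v^2*E^6*a*b + ((1:ℂ)/2)*v^2*E^5*N^3*a^3*b^3 + ((-1:ℂ)/2)*v^2*E^5*N^2*a^2*b^2*m + (-4:ℂ)*v^2*E^5*N*a^2*b^2 + ((-1:ℂ)/2)*v^2*E^5*d*e + (2:ℂ)*v*E^8*N*a*b + (1:ℂ)*v*E^7*N*a*b*s*t + (1:ℂ)*v*E^7*N*a*b*m + ((-1:ℂ)/2)*v*E^7*N*a*e*s + ((-1:ℂ)/2)*v*E^7*N*b*d*t + ((1:ℂ)/4)*v*E^7*N*d*e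 + (-2:ℂ)*v*E^7*a*b + (2:ℂ)*v*E^6*N^3*a^3*b^3 + (1:ℂ)*v*E^6*N^2*a^2*b^2*s*t + (-1:ℂ)*v*E^6*N^2*a^2*b^2*m + ((-1:ℂ)/2)*v*E^6*N^2*a^2*b*e*s + ((-1:ℂ)/2)*v*E^6*N^2*a*b^2*d*t + ((1:ℂ)/4)*v*E^6*N^2*a*b*d*e + (-4:ℂ)*v*E^6*N*a^2*b^2 + (-1:ℂ)*v*E^6*a*b*s*t + (-1:ℂ)*v*E^6*a*b*m + ((1:ℂ)/2)*v*E^6*a*e*s + ((1:ℂ)/2)*v*E^6*b*d*t + ((-1:ℂ)/4)*v*E^6*d*e + (-2:ℂ)*v*E^5*N^2*a^3*b^3 + (-1:ℂ)*v*E^5*N*a^2*b^2*s*t + (1:ℂ)*v*E^5*N*a^2*b^2*m + ((1:ℂ)/2)*v*E^5*N*a^2*b*e*s + ((1:ℂ)/2)*v*E^5*N*a*b^2*d*t + ((-1:ℂ)/4)*v*E^5*N*a*b*d*e + (4:ℂ)*v*E^5*a^2*b^2 + (1:ℂ)*E^9*N*a*b + (1:ℂ)*E^8*N^2*a^2*b^2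 + ((1:ℂ)/2)*E^8*N*a*b*s*t + ((1:ℂ)/2)*E^8*N*a*b*m + ((-1:ℂ)/4)*E^8*N*a*e*s + ((-1:ℂ)/4)*E^8*N*b*d*t + ((1:ℂ)/8)*E^8*N*d*e + (-1:ℂ)*E^8*a*b + (1:ℂ)*E^7*N^3*a^3*b^3 + (1:ℂ)*E^7*N^2*a^2*b^2*s*t + ((-1:ℂ)/2)*E^7*N^2*a^2*b*e*s + ((-1:ℂ)/2)*E^7*N^2*a*b^2*d*t + ((1:ℂ)/4)*E^7*N^2*a*b*d*e + (-3:ℂ)*E^7*N*a^2*b^2 + ((-1:ℂ)/2)*E^7*a*b*s*t + ((-1:ℂ)/2)*E^7*a*b*m + ((1:ℂ)/4)*E^7*a*e*s + ((1:ℂ)/4)*E^7*b*d*t + ((-1:ℂ)/8)*E^7*d*e + (1:ℂ)*E^6*N^4*a^4*b^4 + ((1:ℂ)/2)*E^6*N^3*a^3*b^3*s*t + ((-1:ℂ)/2)*E^6*N^3*a^3*b^3*m + ((-1:ℂ)/4)*E^6*N^3*a^3*b^2*e*s + ((-1:ℂ)/4)*E^6*N^3*a^2*b^3*d*t + ((1:ℂ)/8)*E^6*N^3*a^2*b^2*d*e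 + (-3:ℂ)*E^6*N^2*a^3*b^3 + (-1:ℂ)*E^6*N*a^2*b^2*s*t + ((1:ℂ)/2)*E^6*N*a^2*b*e*s + ((1:ℂ)/2)*E^6*N*a*b^2*d*t + ((-1:ℂ)/4)*E^6*N*a*b*d*e + (2:ℂ)*E^6*a^2*b^2 + (-1:ℂ)*E^5*N^3*a^4*b^4 + ((-1:ℂ)/2)*E^5*N^2*a^3*b^3*s*t + ((1:ℂ)/2)*E^5*N^2*a^3*b^3*m + ((1:ℂ)/4)*E^5*N^2*a^3*b^2*e*s + ((1:ℂ)/4)*E^5*N^2*a^2*b^3*d*t + ((-1:ℂ)/8)*E^5*N^2*a^2*b^2*d*e + (2:ℂ)*E^5*N*a^3*b^3) * hv + ((1:ℂ)*E^9*a*b + (2:ℂ)*E^8*N*a^2*b^2 + ((1:ℂ)/2)*E^8*a*b*s*t + ((1:ℂ)/2)*E^8*a*b*m + ((-1:ℂ)/4)*E^8*a*e*s + ((-1:ℂ)/4)*E^8*b*d*t + ((1:ℂ)/8)*E^8*d*e + (2:ℂ)*E^7*N^2*a^3*b^3 + ((3:ℂ)/2)*E^7*N*a^2*b^2*s*t +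 ((1:ℂ)/2)*E^7*N*a^2*b^2*m + ((-3:ℂ)/4)*E^7*N*a^2*b*e*s + ((-3:ℂ)/4)*E^7*N*a*b^2*d*t + ((3:ℂ)/8)*E^7*N*a*b*d*e + (-2:ℂ)*E^7*a^2*b^2 + (2:ℂ)*E^6*N^3*a^4*b^4 + ((3:ℂ)/2)*E^6*N^2*a^3*b^3*s*t + ((-1:ℂ)/2)*E^6*N^2*a^3*b^3*m + ((-3:ℂ)/4)*E^6*N^2*a^3*b^2*e*s + ((-3:ℂ)/4)*E^6*N^2*a^2*b^3*d*t + ((3:ℂ)/8)*E^6*N^2*a^2*b^2*d*e + (-4:ℂ)*E^6*N*a^3*b^3 + (1:ℂ)*E^5*N^4*a^5*b^5 + ((1:ℂ)/2)*E^5*N^3*a^4*b^4*s*t + ((-1:ℂ)/2)*E^5*N^3*a^4*b^4*m + ((-1:ℂ)/4)*E^5*N^3*a^4*b^3*e*s + ((-1:ℂ)/4)*E^5*N^3*a^3*b^4*d*t + ((1:ℂ)/8)*E^5*N^3*a^3*b^3*d*e + (-2:ℂ)*E^5*N^2*a^4*b^4) * hEN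
  exact mul_left_cancel₀ (mul_ne_zero (pow_ne_zero 5 hE0)
    (mul_ne_zero (by norm_num : (4:ℂ) ≠ 0) (pow_ne_zero 2 hv0))) hmain


set_option maxHeartbeats 2000000 in
theorem stmt4 (Ω : Set ℂ) (hΩ : IsOpen Ω)
    (α : ℂ → ℂ) (hα : DifferentiableOn ℂ α Ω)
    (uh u : ℂ → ℝ)
    (huh : ContDiffOn ℝ (⊤ : ℕ∞) uh Ω)
    (hu : ContDiffOn ℝ (⊤ : ℕ∞) u Ω)
    (hineq : ∀ w ∈ Ω, ‖α w‖ ^ 2 < Real.exp (2 * uh w))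
    (hudef : ∀ w ∈ Ω,
      2 * Real.exp (u w) = Real.exp (uh w) + ‖α w‖ ^ 2 * Real.exp (-uh w)) :
    -- `B := e^{2u} − |α|²`
    (∀ w ∈ Ω,
        wderivZbar (fun z => wderivZ (fun z' => (u z' : ℂ)) z) w * (Real.exp (u w) : ℂ)
            * ((Real.exp (2 * u w) - ‖α w‖ ^ 2 : ℝ) : ℂ)
          - (1 / 4 : ℂ) * (‖wderivZ α w‖ : ℂ) ^ 2 * (Real.exp (u w) : ℂ)
          - (‖wderivZ (fun z => (u z : ℂ)) w‖ : ℂ) ^ 2 * (Real.exp (u w) : ℂ)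
            * (‖α w‖ : ℂ) ^ 2
          + (1 / 2 : ℂ) * wderivZ α w * wderivZbar (fun z => (u z : ℂ)) w
            * (Real.exp (u w) : ℂ) * conj (α w)
          + (1 / 2 : ℂ) * wderivZbar (fun z => conj (α z)) w * wderivZ (fun z => (u z : ℂ)) w
            * (Real.exp (u w) : ℂ) * α w
          + 2 * ((Real.exp (2 * u w) - ‖α w‖ ^ 2 : ℝ) : ℂ) ^ 2 = 0)
    ↔
    (∀ w ∈ Ω,
        wderivZbar (fun z => wderivZ (fun z' => (uh z' : ℂ)) z) w
          + (Real.exp (uh w) : ℂ)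
          - (‖α w‖ : ℂ) ^ 2 * (Real.exp (-uh w) : ℂ) = 0) := by
  have hVc : ContDiffOn ℝ (⊤ : ℕ∞) (fun z => ((u z : ℝ) : ℂ)) Ω :=
    Complex.ofRealCLM.contDiff.comp_contDiffOn hu
  have hUc : ContDiffOn ℝ (⊤ : ℕ∞) (fun z => ((uh z : ℝ) : ℂ)) Ω :=
    Complex.ofRealCLM.contDiff.comp_contDiffOn huh
  have hVd : ∀ z ∈ Ω, DifferentiableAt ℝ (fun z' => ((u z' : ℝ) : ℂ)) z := fun z hz =>
    (hVc.differentiableOn (by simp)).differentiableAt (hΩ.mem_nhds hz)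
  have hUd : ∀ z ∈ Ω, DifferentiableAt ℝ (fun z' => ((uh z' : ℝ) : ℂ)) z := fun z hz =>
    (hUc.differentiableOn (by simp)).differentiableAt (hΩ.mem_nhds hz)
  have hαd : ∀ z ∈ Ω, DifferentiableAt ℂ α z := fun z hz =>
    hα.differentiableAt (hΩ.mem_nhds hz)
  have hαdR : ∀ z ∈ Ω, DifferentiableAt ℝ α z := fun z hz => (hαd z hz).restrictScalars ℝ
  have hcαd : ∀ z ∈ Ω, DifferentiableAt ℝ (fun z' => conj (α z')) z := fun z hz =>
    Complex.conjCLE.differentiableAt.comp z (hαdR z hz)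
  have habs : ∀ z : ℂ, ((‖z‖ : ℝ) : ℂ) ^ 2 = z * conj z := fun z => by
    rw [← Complex.ofReal_pow, Complex.sq_norm]; exact (Complex.mul_conj z).symm
  have hCons : ∀ z ∈ Ω, (2 : ℂ) * Complex.exp ((u z : ℝ) : ℂ)
      = Complex.exp ((uh z : ℝ) : ℂ) + α z * conj (α z) * Complex.exp (-((uh z : ℝ) : ℂ)) := by
    intro z hz
    have h := congrArg (fun x : ℝ => (x : ℂ)) (hudef z hz)
    simp only [Complex.ofReal_mul, Complex.ofReal_add, Complex.ofReal_exp, Complex.ofReal_pow,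
      Complex.ofReal_neg, Complex.ofReal_ofNat] at h
    rw [habs (α z)] at h
    linear_combination h
  -- first derivative identity on Ω
  have hE1 : ∀ z ∈ Ω,
      2 * (Complex.exp ((u z : ℝ) : ℂ) * wderivZ (fun z' => ((u z' : ℝ) : ℂ)) z)
        = wderivZ (fun z' => ((uh z' : ℝ) : ℂ)) z * Complex.exp ((uh z : ℝ) : ℂ)
          + ((deriv α z * conj (α z)) * Complex.exp (-((uh z : ℝ) : ℂ))
            + (α z * conj (α z)) * (Complex.exp (-((uh z : ℝ) : ℂ))
                * (-(wderivZ (fun z' => ((uh z' : ℝ) : ℂ)) z)))) := by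
    intro z hz
    have dV := hVd z hz
    have dU := hUd z hz
    have daR := hαdR z hz
    have dca := hcαd z hz
    have deV : DifferentiableAt ℝ (fun ζ => Complex.exp ((u ζ : ℝ) : ℂ)) z := dV.cexp
    have deU : DifferentiableAt ℝ (fun ζ => Complex.exp ((uh ζ : ℝ) : ℂ)) z := dU.cexp
    have dnU : DifferentiableAt ℝ (fun ζ => -((uh ζ : ℝ) : ℂ)) z := dU.neg
    have deN : DifferentiableAt ℝ (fun ζ => Complex.exp (-((uh ζ : ℝ) : ℂ))) z := dnU.cexp
    have dac : DifferentiableAt ℝ (fun ζ => α ζ * conj (α ζ)) z := daR.mul dca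
    have hev : (fun ζ => (2 : ℂ) * Complex.exp ((u ζ : ℝ) : ℂ)) =ᶠ[nhds z]
        (fun ζ => Complex.exp ((uh ζ : ℝ) : ℂ)
          + α ζ * conj (α ζ) * Complex.exp (-((uh ζ : ℝ) : ℂ))) :=
      Filter.eventuallyEq_of_mem (hΩ.mem_nhds hz) (fun ζ hζ => hCons ζ hζ)
    have h := wderivZ_congr hev
    rw [wderivZ_const_mul deV 2, wderivZ_cexp dV,
      wderivZ_add deU (dac.fun_mul deN),
      wderivZ_cexp dU,
      wderivZ_mul dac deN,
      wderivZ_mul daR dca,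
      wderivZ_cexp dnU,
      wderivZ_neg dU,
      wderivZ_of_holo (hαd z hz),
      wderivZ_conj daR,
      wderivZbar_of_holo (hαd z hz)] at h
    simp only [map_zero] at h
    linear_combination h
  refine forall₂_congr fun w hw => ?_
  have dV := hVd w hw
  have dU := hUd w hw
  have daR := hαdR w hw
  have dca := hcαd w hw
  have deV : DifferentiableAt ℝ (fun ζ => Complex.exp ((u ζ : ℝ) : ℂ)) w := dV.cexp
  have deU : DifferentiableAt ℝ (fun ζ => Complex.exp ((uh ζ : ℝ) : ℂ)) w := dU.cexp
  have dnU : DifferentiableAt ℝ (fun ζ => -((uh ζ : ℝ) : ℂ)) w := dU.neg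
  have deN : DifferentiableAt ℝ (fun ζ => Complex.exp (-((uh ζ : ℝ) : ℂ))) w := dnU.cexp
  have dP : DifferentiableAt ℝ (fun z => wderivZ (fun z' => ((u z' : ℝ) : ℂ)) z) w :=
    diffAt_wderivZ hΩ hVc hw
  have dS : DifferentiableAt ℝ (fun z => wderivZ (fun z' => ((uh z' : ℝ) : ℂ)) z) w :=
    diffAt_wderivZ hΩ hUc hw
  have hαa : AnalyticAt ℂ α w := hα.analyticAt (hΩ.mem_nhds hw)
  have hda : DifferentiableAt ℂ (deriv α) w := by
    have h1 : AnalyticAt ℂ (fderiv ℂ α) w := hαa.fderiv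
    have h2 : DifferentiableAt ℂ (fun z => fderiv ℂ α z 1) w :=
      (ContinuousLinearMap.apply ℂ ℂ (1 : ℂ)).differentiableAt.comp w h1.differentiableAt
    have h3 : (fun z => fderiv ℂ α z 1) = deriv α := funext fun z => fderiv_apply_one_eq_deriv
    rwa [h3] at h2
  have hdaR : DifferentiableAt ℝ (deriv α) w := hda.restrictScalars ℝ
  -- second derivative identity at w
  have hev2 : (fun z => 2 * (Complex.exp ((u z : ℝ) : ℂ)
        * wderivZ (fun z' => ((u z' : ℝ) : ℂ)) z)) =ᶠ[nhds w]
      (fun z => wderivZ (fun z' => ((uh z' : ℝ) : ℂ)) z * Complex.exp ((uh z : ℝ) : ℂ)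
        + ((deriv α z * conj (α z)) * Complex.exp (-((uh z : ℝ) : ℂ))
          + (α z * conj (α z)) * (Complex.exp (-((uh z : ℝ) : ℂ))
              * (-(wderivZ (fun z' => ((uh z' : ℝ) : ℂ)) z))))) :=
    Filter.eventuallyEq_of_mem (hΩ.mem_nhds hw) (fun z hz => hE1 z hz)
  have h2 := wderivZbar_congr hev2
  rw [wderivZbar_const_mul (deV.fun_mul dP) 2,
    wderivZbar_mul deV dP,
    wderivZbar_cexp dV,
    wderivZbar_add (dS.fun_mul deU) (((hdaR.fun_mul dca).fun_mul deN).fun_add ((daR.fun_mul dca).fun_mul (deN.fun_mul dS.fun_neg))),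
    wderivZbar_add ((hdaR.fun_mul dca).fun_mul deN) ((daR.fun_mul dca).fun_mul (deN.fun_mul dS.fun_neg)),
    wderivZbar_mul dS deU,
    wderivZbar_cexp dU,
    wderivZbar_mul (hdaR.fun_mul dca) deN,
    wderivZbar_mul hdaR dca,
    wderivZbar_mul (daR.fun_mul dca) (deN.fun_mul dS.fun_neg),
    wderivZbar_mul daR dca,
    wderivZbar_mul deN dS.fun_neg,
    wderivZbar_cexp dnU,
    wderivZbar_neg dU,
    wderivZbar_neg dS,
    wderivZbar_of_holo hda,
    wderivZbar_of_holo (hαd w hw),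
    wderivZbar_conj daR,
    wderivZ_of_holo (hαd w hw)] at h2
  -- abbreviations (as plain terms)
  have hcp : conj (wderivZ (fun z' => ((u z' : ℝ) : ℂ)) w)
      = wderivZbar (fun z' => ((u z' : ℝ) : ℂ)) w :=
    (wderivZbar_eq_conj_of_real u dV).symm
  have hct : conj (wderivZ (fun z' => ((uh z' : ℝ) : ℂ)) w)
      = wderivZbar (fun z' => ((uh z' : ℝ) : ℂ)) w :=
    (wderivZbar_eq_conj_of_real uh dU).symm
  -- key_alg hypotheses
  have hEN : Complex.exp ((uh w : ℝ) : ℂ) * Complex.exp (-((uh w : ℝ) : ℂ)) = 1 := by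
    rw [← Complex.exp_add]; simp
  have hv0 : Complex.exp ((u w : ℝ) : ℂ) ≠ 0 := Complex.exp_ne_zero _
  have hvk : 2 * Complex.exp ((u w : ℝ) : ℂ)
      = Complex.exp ((uh w : ℝ) : ℂ)
        + α w * conj (α w) * Complex.exp (-((uh w : ℝ) : ℂ)) := hCons w hw
  have hPk : 2 * Complex.exp ((u w : ℝ) : ℂ) * wderivZ (fun z' => ((u z' : ℝ) : ℂ)) w
      = wderivZ (fun z' => ((uh z' : ℝ) : ℂ)) w
          * (Complex.exp ((uh w : ℝ) : ℂ)
            - α w * conj (α w) * Complex.exp (-((uh w : ℝ) : ℂ)))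
        + deriv α w * conj (α w) * Complex.exp (-((uh w : ℝ) : ℂ)) := by
    linear_combination hE1 w hw
  have hQk : 2 * Complex.exp ((u w : ℝ) : ℂ) * wderivZbar (fun z' => ((u z' : ℝ) : ℂ)) w
      = wderivZbar (fun z' => ((uh z' : ℝ) : ℂ)) w
          * (Complex.exp ((uh w : ℝ) : ℂ)
            - α w * conj (α w) * Complex.exp (-((uh w : ℝ) : ℂ)))
        + conj (deriv α w) * α w * Complex.exp (-((uh w : ℝ) : ℂ)) := by
    have hc := congrArg conj (hE1 w hw)
    simp only [map_mul, map_add, map_neg, map_ofNat, Complex.conj_conj,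
      ← Complex.exp_conj, Complex.conj_ofReal] at hc
    rw [hcp, hct] at hc
    linear_combination hc
  have hMk : 2 * (wderivZbar (fun z' => ((u z' : ℝ) : ℂ)) w * Complex.exp ((u w : ℝ) : ℂ)
        * wderivZ (fun z' => ((u z' : ℝ) : ℂ)) w
      + Complex.exp ((u w : ℝ) : ℂ)
        * wderivZbar (fun z => wderivZ (fun z' => ((u z' : ℝ) : ℂ)) z) w)
      = wderivZbar (fun z => wderivZ (fun z' => ((uh z' : ℝ) : ℂ)) z) w
          * Complex.exp ((uh w : ℝ) : ℂ)
        + wderivZ (fun z' => ((uh z' : ℝ) : ℂ)) w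
          * (wderivZbar (fun z' => ((uh z' : ℝ) : ℂ)) w * Complex.exp ((uh w : ℝ) : ℂ))
        + ((deriv α w * conj (deriv α w) * Complex.exp (-((uh w : ℝ) : ℂ))
            + deriv α w * conj (α w)
              * (Complex.exp (-((uh w : ℝ) : ℂ))
                * (-(wderivZbar (fun z' => ((uh z' : ℝ) : ℂ)) w))))
          + (α w * conj (deriv α w))
            * (Complex.exp (-((uh w : ℝ) : ℂ))
              * (-(wderivZ (fun z' => ((uh z' : ℝ) : ℂ)) w)))
          + α w * conj (α w)
            * ((Complex.exp (-((uh w : ℝ) : ℂ))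
                * (-(wderivZbar (fun z' => ((uh z' : ℝ) : ℂ)) w)))
                * (-(wderivZ (fun z' => ((uh z' : ℝ) : ℂ)) w))
              + Complex.exp (-((uh w : ℝ) : ℂ))
                * (-(wderivZbar (fun z => wderivZ (fun z' => ((uh z' : ℝ) : ℂ)) z) w)))) := by
    linear_combination h2
  have KEY := key_alg (Complex.exp ((uh w : ℝ) : ℂ)) (Complex.exp (-((uh w : ℝ) : ℂ)))
    (Complex.exp ((u w : ℝ) : ℂ)) (α w) (conj (α w)) (deriv α w) (conj (deriv α w))
    (wderivZ (fun z' => ((uh z' : ℝ) : ℂ)) w) (wderivZbar (fun z' => ((uh z' : ℝ) : ℂ)) w)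
    (wderivZbar (fun z => wderivZ (fun z' => ((uh z' : ℝ) : ℂ)) z) w)
    (wderivZ (fun z' => ((u z' : ℝ) : ℂ)) w) (wderivZbar (fun z' => ((u z' : ℝ) : ℂ)) w)
    (wderivZbar (fun z => wderivZ (fun z' => ((u z' : ℝ) : ℂ)) z) w)
    hEN hv0 (by linear_combination hvk) (by linear_combination hPk)
    (by linear_combination hQk) (by linear_combination hMk)
  -- positivity of W
  have hWr : 0 < Real.exp (uh w) - ‖α w‖ ^ 2 * Real.exp (-uh w) := by
    have h := hineq w hw
    have e1 : Real.exp (2 * uh w) = Real.exp (uh w) * Real.exp (uh w) := by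
      rw [two_mul, Real.exp_add]
    have e2 : Real.exp (-uh w) = (Real.exp (uh w))⁻¹ := Real.exp_neg _
    have hpos := Real.exp_pos (uh w)
    rw [e2]
    rw [e1] at h
    rw [sub_pos]
    calc ‖α w‖ ^ 2 * (Real.exp (uh w))⁻¹
        < Real.exp (uh w) * Real.exp (uh w) * (Real.exp (uh w))⁻¹ := by
          apply mul_lt_mul_of_pos_right h (by positivity)
      _ = Real.exp (uh w) := by field_simp
  have hWne : (Complex.exp ((uh w : ℝ) : ℂ)
      - α w * conj (α w) * Complex.exp (-((uh w : ℝ) : ℂ))) / 2 ≠ 0 := by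
    have heq : Complex.exp ((uh w : ℝ) : ℂ)
        - α w * conj (α w) * Complex.exp (-((uh w : ℝ) : ℂ))
        = ((Real.exp (uh w) - ‖α w‖ ^ 2 * Real.exp (-uh w) : ℝ) : ℂ) := by
      rw [Complex.ofReal_sub, Complex.ofReal_mul, Complex.ofReal_exp, Complex.ofReal_exp,
        Complex.ofReal_pow, habs (α w), Complex.ofReal_neg]
    rw [heq]
    simp only [ne_eq, div_eq_zero_iff]
    push_neg
    exact ⟨Complex.ofReal_ne_zero.mpr (ne_of_gt hWr), two_ne_zero⟩
  -- rewrite the statement into the algebra vocabulary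
  have hd : wderivZ α w = deriv α w := wderivZ_of_holo (hαd w hw)
  have hcbar : wderivZbar (fun z => conj (α z)) w = conj (deriv α w) := by
    rw [wderivZbar_conj daR, hd]
  have hPabs : ((‖wderivZ (fun z => ((u z : ℝ) : ℂ)) w‖ : ℝ) : ℂ) ^ 2
      = wderivZ (fun z' => ((u z' : ℝ) : ℂ)) w * wderivZbar (fun z' => ((u z' : ℝ) : ℂ)) w := by
    rw [habs, hcp]
  have hexp2u : ((Real.exp (2 * u w) : ℝ) : ℂ) = Complex.exp ((u w : ℝ) : ℂ) ^ 2 := by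
    rw [Complex.ofReal_exp, Complex.ofReal_mul, Complex.ofReal_ofNat, two_mul,
      Complex.exp_add, sq]
  have hsub : ((Real.exp (2 * u w) - ‖α w‖ ^ 2 : ℝ) : ℂ)
      = Complex.exp ((u w : ℝ) : ℂ) ^ 2 - α w * conj (α w) := by
    rw [Complex.ofReal_sub, hexp2u, Complex.ofReal_pow, habs (α w)]
  have heu : ((Real.exp (u w) : ℝ) : ℂ) = Complex.exp ((u w : ℝ) : ℂ) := Complex.ofReal_exp _
  have heuh : ((Real.exp (uh w) : ℝ) : ℂ) = Complex.exp ((uh w : ℝ) : ℂ) := Complex.ofReal_exp _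
  have henuh : ((Real.exp (-uh w) : ℝ) : ℂ) = Complex.exp (-((uh w : ℝ) : ℂ)) := by
    rw [Complex.ofReal_exp, Complex.ofReal_neg]
  have hdabs : ((‖deriv α w‖ : ℝ) : ℂ) ^ 2 = deriv α w * conj (deriv α w) :=
    habs (deriv α w)
  have haabs : ((‖α w‖ : ℝ) : ℂ) ^ 2 = α w * conj (α w) := habs (α w)
  rw [hd, hcbar, hsub, heu, heuh, henuh, hdabs, haabs, hPabs]
  constructor
  · intro hG
    have h0 : ((Complex.exp ((uh w : ℝ) : ℂ)
        - α w * conj (α w) * Complex.exp (-((uh w : ℝ) : ℂ))) / 2) ^ 3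
        * (wderivZbar (fun z => wderivZ (fun z' => ((uh z' : ℝ) : ℂ)) z) w
          + Complex.exp ((uh w : ℝ) : ℂ)
          - α w * conj (α w) * Complex.exp (-((uh w : ℝ) : ℂ))) = 0 := by
      rw [← KEY]; linear_combination hG
    have h1 := (mul_eq_zero.mp h0).resolve_left (pow_ne_zero 3 hWne)
    linear_combination h1
  · intro hSG
    have h0 : wderivZbar (fun z => wderivZ (fun z' => ((uh z' : ℝ) : ℂ)) z) w
        + Complex.exp ((uh w : ℝ) : ℂ)
        - α w * conj (α w) * Complex.exp (-((uh w : ℝ) : ℂ)) = 0 := by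
      linear_combination hSG
    linear_combination KEY + ((Complex.exp ((uh w : ℝ) : ℂ)
      - α w * conj (α w) * Complex.exp (-((uh w : ℝ) : ℂ))) / 2) ^ 3 * h0
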